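/- For integers m ≥ 3, d_1 ≤ d_2 ≤ ... ≤ d_m and positive integers ε_1, ..., ε_{m-2} satisfying d_{j+2} + ε_j ≤ d_{j+3} + ε_{j+1} for j = 1, ..., m−3, set t = ε_1 + ... + ε_{m-2}, d = d_1 + d_2 + 1 − t, τ = d_1² + d_1d_2 + d_2² − t(d_1 + d_2) − Σ_{j=1}^{m-2} ε_j d_{j+2} + Σ_{1≤i<j≤m-2} ε_i ε_j, and τ'_max = (d−1)² − d_1(d − d_1 − 1) − (2d_1 + 2 − d)(2d_1 + 1 − d)/2. Assume 2d_1 ≥ d. Then τ = τ'_max − 1 if and only if exactly one of the following holds: (1) d_1 = d_2 = ... = d_{m-1}, d_m = d_1 + 1 and ε_1 = ... = ε_{m-2} = 1 (in which case m = 2d_1 + 3 − d), or (2) d_1 = d_2 = ... = d_m, ε_1 = ... = ε_{m-3} = 1 and ε_{m-2} = 2 (in which case m = 2d_1 + 2 − d). -/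

import Mathlib

open Finset

lemma aux_sq_sum (ε : ℕ → ℤ) : ∀ n : ℕ,
    (∑ j ∈ Icc 1 n, ε j) ^ 2
      = ∑ j ∈ Icc 1 n, (ε j) ^ 2
        + 2 * ∑ i ∈ Icc 1 n, ∑ j ∈ Icc (i + 1) n, ε i * ε j := by
  intro n
  induction n with
  | zero => simp
  | succ n ih =>
    rw [Finset.sum_Icc_succ_top (by omega : 1 ≤ n + 1),
      Finset.sum_Icc_succ_top (by omega : 1 ≤ n + 1) (fun j => (ε j) ^ 2),
      Finset.sum_Icc_succ_top (by omega : 1 ≤ n + 1)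
        (fun i => ∑ j ∈ Icc (i + 1) (n + 1), ε i * ε j)]
    have hinner : ∀ i ∈ Icc 1 n,
        ∑ j ∈ Icc (i + 1) (n + 1), ε i * ε j
          = ∑ j ∈ Icc (i + 1) n, ε i * ε j + ε i * ε (n + 1) := by
      intro i hi
      rw [mem_Icc] at hi
      exact Finset.sum_Icc_succ_top (by omega) _
    rw [Finset.sum_congr rfl hinner, Finset.sum_add_distrib]
    have hempty : ∑ j ∈ Icc (n + 1 + 1) (n + 1), ε (n + 1) * ε j = 0 := by
      rw [Finset.Icc_eq_empty (by omega)]; simp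
    rw [hempty, ← Finset.sum_mul]
    linear_combination ih

lemma aux_mono (f : ℕ → ℤ) : ∀ n : ℕ,
    (∀ j, 1 ≤ j → j + 1 ≤ n → f j ≤ f (j + 1)) →
    ∀ j, 1 ≤ j → j ≤ n → f j ≤ f n := by
  intro n
  induction n with
  | zero => intro _ j _ hj; omega
  | succ n ih =>
    intro hstep j hj1 hjn
    rcases Nat.lt_or_ge j (n + 1) with h | h
    · have h1 : f j ≤ f n := ih (fun j a b => hstep j a (by omega)) j hj1 (by omega)
      have h2 : f n ≤ f (n + 1) := hstep n (by omega) (by omega)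
      linarith
    · have : j = n + 1 := by omega
      rw [this]

lemma aux_sum_one (n : ℕ) : ∑ j ∈ Icc 1 n, (1 : ℤ) = n := by
  simp [Nat.card_Icc]

set_option maxHeartbeats 1000000 in
/-- Corollary 5.6 (nearly maximal Tjurina curves): `τ = τ'_max − 1` iff
exactly one of the two listed situations occurs. -/
theorem nearly_maximal_Tjurina_characterization (m : ℕ) (hm : 3 ≤ m)
    (d ε : ℕ → ℤ)
    (hsort : ∀ i ∈ Icc 1 m, ∀ j ∈ Icc 1 m, i ≤ j → d i ≤ d j)
    (hε : ∀ j ∈ Icc 1 (m - 2), 0 < ε j)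
    (hc : ∀ j, 1 ≤ j → j ≤ m - 3 → d (j + 2) + ε j ≤ d (j + 3) + ε (j + 1))
    (t : ℤ) (ht : t = ∑ j ∈ Icc 1 (m - 2), ε j)
    (D : ℤ) (hD : D = d 1 + d 2 + 1 - t)
    (τ : ℤ)
    (hτ : τ = (d 1) ^ 2 + d 1 * d 2 + (d 2) ^ 2 - t * (d 1 + d 2)
        - ∑ j ∈ Icc 1 (m - 2), ε j * d (j + 2)
        + ∑ i ∈ Icc 1 (m - 2), ∑ j ∈ Icc (i + 1) (m - 2), ε i * ε j)
    (τmax' : ℚ)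
    (hτmax' : τmax' = ((D : ℚ) - 1) ^ 2 - (d 1 : ℚ) * ((D : ℚ) - d 1 - 1)
        - (2 * (d 1 : ℚ) + 2 - D) * (2 * (d 1 : ℚ) + 1 - D) / 2)
    (h2d1 : D ≤ 2 * d 1) :
    (τ : ℚ) = τmax' - 1 ↔
      Xor'
        ((∀ i ∈ Icc 1 (m - 1), d i = d 1) ∧ d m = d 1 + 1 ∧
          (∀ j ∈ Icc 1 (m - 2), ε j = 1) ∧ (m : ℤ) = 2 * d 1 + 3 - D)
        ((∀ i ∈ Icc 1 m, d i = d 1) ∧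
          (∀ j ∈ Icc 1 (m - 3), ε j = 1) ∧ ε (m - 2) = 2 ∧
          (m : ℤ) = 2 * d 1 + 2 - D) := by
  obtain ⟨k, rfl⟩ : ∃ k, m = k + 3 := ⟨m - 3, by omega⟩
  have e1 : k + 3 - 1 = k + 2 := by omega
  have e2 : k + 3 - 2 = k + 1 := by omega
  have e3 : k + 3 - 3 = k := by omega
  rw [e2] at ht hτ hε
  simp only [e1, e2, e3]
  simp only [e3] at hc
  -- abbreviations
  set G := ∑ j ∈ Icc 1 (k + 1), ε j * (d (j + 2) - d 2) with hGdef
  set Q := ∑ j ∈ Icc 1 (k + 1), (ε j) ^ 2 with hQdef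
  clear_value G Q
  have ht2 : t ^ 2 = Q + 2 * ∑ i ∈ Icc 1 (k + 1), ∑ j ∈ Icc (i + 1) (k + 1), ε i * ε j := by
    rw [ht, hQdef]; exact aux_sq_sum ε (k + 1)
  have hGA : ∑ j ∈ Icc 1 (k + 1), ε j * d (j + 2) = G + t * d 2 := by
    rw [hGdef, ht, Finset.sum_mul, ← Finset.sum_add_distrib]
    exact Finset.sum_congr rfl (fun j _ => by ring)
  have h2τ : 2 * τ = 2 * (d 1 ^ 2 + d 1 * d 2 + d 2 ^ 2) - 2 * t * (d 1 + d 2)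
      - 2 * (G + t * d 2) + (t ^ 2 - Q) := by
    linear_combination 2 * hτ - 2 * hGA - ht2
  have key : ((τ : ℚ) = τmax' - 1) ↔
      (2 * G + Q + t ^ 2 = (d 1 - d 2 + t) ^ 2 + (d 1 - d 2 + t) + 2) := by
    rw [hτmax', hD]
    have h2τQ : 2 * (τ : ℚ) = 2 * ((d 1 : ℚ) ^ 2 + (d 1 : ℚ) * (d 2 : ℚ) + (d 2 : ℚ) ^ 2)
        - 2 * (t : ℚ) * ((d 1 : ℚ) + (d 2 : ℚ)) - 2 * ((G : ℚ) + (t : ℚ) * (d 2 : ℚ))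
        + ((t : ℚ) ^ 2 - (Q : ℚ)) := by exact_mod_cast h2τ
    constructor
    · intro h
      push_cast at h
      have hq : ((2 * G + Q + t ^ 2 : ℤ) : ℚ)
          = (((d 1 - d 2 + t) ^ 2 + (d 1 - d 2 + t) + 2 : ℤ) : ℚ) := by
        push_cast
        linear_combination h2τQ - 2 * h
      exact_mod_cast hq
    · intro h
      have hq : ((2 * G + Q + t ^ 2 : ℤ) : ℚ)
          = (((d 1 - d 2 + t) ^ 2 + (d 1 - d 2 + t) + 2 : ℤ) : ℚ) := by exact_mod_cast h
      push_cast at hq ⊢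
      linear_combination (1/2 : ℚ) * h2τQ - (1/2 : ℚ) * hq
  rw [key]
  clear hτ hτmax' h2τ ht2 hGA key
  -- basic facts
  have hmem : ∀ i, 1 ≤ i → i ≤ k + 3 → i ∈ Icc 1 (k + 3) := fun i h1 h2 => mem_Icc.mpr ⟨h1, h2⟩
  have hab : d 1 ≤ d 2 :=
    hsort 1 (hmem 1 (by omega) (by omega)) 2 (hmem 2 (by omega) (by omega)) (by omega)
  have hd2le : ∀ j ∈ Icc 1 (k + 1), d 2 ≤ d (j + 2) := by
    intro j hj; rw [mem_Icc] at hj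
    exact hsort 2 (hmem 2 (by omega) (by omega)) (j + 2) (hmem _ (by omega) (by omega)) (by omega)
  have hG0 : 0 ≤ G := by
    rw [hGdef]
    exact Finset.sum_nonneg fun j hj =>
      mul_nonneg (le_of_lt (hε j hj)) (sub_nonneg.mpr (hd2le j hj))
  have hQt : t ≤ Q := by
    rw [ht, hQdef]
    refine Finset.sum_le_sum fun j hj => ?_
    have := hε j hj; nlinarith
  have hu1 : 1 ≤ d 1 - d 2 + t := by
    have h1 : d 1 + d 2 + 1 - t ≤ 2 * d 1 := hD ▸ h2d1
    linarith
  have hH : Q - t = ∑ j ∈ Icc 1 (k + 1), (ε j ^ 2 - ε j) := by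
    rw [hQdef, ht, Finset.sum_sub_distrib]
  have hHnn : ∀ j ∈ Icc 1 (k + 1), 0 ≤ ε j ^ 2 - ε j := fun j hj => by
    have := hε j hj; nlinarith
  have hH0 : 0 ≤ Q - t := by rw [hH]; exact Finset.sum_nonneg hHnn
  have e4 : k + 1 + 2 = k + 3 := by omega
  have hksucc : (1 : ℕ) ≤ k + 1 := by omega
  constructor
  · -- forward direction
    intro hP
    have hd12 : d 1 = d 2 := by
      by_contra hne
      have hlt : d 1 + 1 ≤ d 2 := by omega
      have h1 : (t - (d 1 - d 2 + t)) * (t + (d 1 - d 2 + t) + 1) ≤ 2 := by nlinarith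
      have hs1 : 1 ≤ t - (d 1 - d 2 + t) := by linarith
      have hpos : 0 ≤ t + (d 1 - d 2 + t) + 1 := by linarith
      have h2 : 1 * (t + (d 1 - d 2 + t) + 1)
          ≤ (t - (d 1 - d 2 + t)) * (t + (d 1 - d 2 + t) + 1) :=
        mul_le_mul_of_nonneg_right hs1 hpos
      linarith
    have hP' : 2 * G + (Q - t) = 2 := by
      linear_combination hP + (d 1 - d 2 + 2 * t + 1) * hd12
    have hGcases : G = 0 ∨ G = 1 := by omega
    rcases hGcases with hG00 | hG11
    · -- case (2): all d equal, ε = (1,…,1,2)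
      have hQ2 : Q - t = 2 := by omega
      have hsum0 : ∑ j ∈ Icc 1 (k + 1), ε j * (d (j + 2) - d 2) = 0 := by
        rw [← hGdef]; exact hG00
      have hz := (Finset.sum_eq_zero_iff_of_nonneg (fun j hj =>
        mul_nonneg (le_of_lt (hε j hj)) (sub_nonneg.mpr (hd2le j hj)))).mp hsum0
      have hdeq : ∀ j ∈ Icc 1 (k + 1), d (j + 2) = d 2 := by
        intro j hj
        have h1 := hz j hj
        have h2 := hε j hj
        rcases mul_eq_zero.mp h1 with h | h
        · omega
        · omega
      have hdall : ∀ i ∈ Icc 1 (k + 3), d i = d 1 := by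
        intro i hi; rw [mem_Icc] at hi; obtain ⟨hi1, hi2⟩ := hi
        rcases Nat.lt_or_ge i 3 with h | h
        · interval_cases i
          · rfl
          · exact hd12.symm
        · obtain ⟨j, rfl⟩ : ∃ j, i = j + 2 := ⟨i - 2, by omega⟩
          rw [hdeq j (mem_Icc.mpr ⟨by omega, by omega⟩)]
          exact hd12.symm
      have hmono : ∀ j, 1 ≤ j → j + 1 ≤ k + 1 → ε j ≤ ε (j + 1) := by
        intro j h1 h2
        have h3 := hc j h1 (by omega)
        have h4 := hdeq j (mem_Icc.mpr ⟨by omega, by omega⟩)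
        have h5 := hdeq (j + 1) (mem_Icc.mpr ⟨by omega, by omega⟩)
        have e5 : j + 1 + 2 = j + 3 := by omega
        rw [e5] at h5
        linarith
      have hεtop2 : ∀ j, 1 ≤ j → j ≤ k + 1 → ε j ≤ ε (k + 1) := aux_mono ε (k + 1) hmono
      have hHsum : ∑ j ∈ Icc 1 (k + 1), (ε j ^ 2 - ε j) = 2 := by rw [← hH]; exact hQ2
      have hεle2 : ∀ j ∈ Icc 1 (k + 1), ε j ≤ 2 := by
        intro j hj
        have h1 : ε j ^ 2 - ε j ≤ 2 := hHsum ▸ Finset.single_le_sum hHnn hj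
        nlinarith [sq_nonneg (ε j - 2)]
      have htop2 : ε (k + 1) = 2 := by
        by_contra hne
        have h0 := hε (k + 1) (mem_Icc.mpr ⟨hksucc, le_refl _⟩)
        have h1 := hεle2 (k + 1) (mem_Icc.mpr ⟨hksucc, le_refl _⟩)
        have h2 : ε (k + 1) = 1 := by omega
        have hzz : ∀ j ∈ Icc 1 (k + 1), ε j ^ 2 - ε j = 0 := by
          intro j hj; rw [mem_Icc] at hj
          have h3 := hεtop2 j hj.1 hj.2
          have h4 := hε j (mem_Icc.mpr hj)
          have h5 : ε j = 1 := by omega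
          rw [h5]; ring
        have := Finset.sum_eq_zero hzz
        rw [this] at hHsum
        exact absurd hHsum (by norm_num)
      have hsplitH := Finset.sum_Icc_succ_top hksucc (fun j => ε j ^ 2 - ε j)
      rw [hHsum, htop2] at hsplitH
      have hrest0 : ∑ j ∈ Icc 1 k, (ε j ^ 2 - ε j) = 0 := by
        have : (2 : ℤ) ^ 2 - 2 = 2 := by norm_num
        linarith [hsplitH, this]
      have hε1k : ∀ j ∈ Icc 1 k, ε j = 1 := by
        have hz2 := (Finset.sum_eq_zero_iff_of_nonneg (fun j hj => by
          rw [mem_Icc] at hj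
          exact hHnn j (mem_Icc.mpr ⟨hj.1, by omega⟩))).mp hrest0
        intro j hj
        have h1 := hz2 j hj
        rw [mem_Icc] at hj
        have h2 := hε j (mem_Icc.mpr ⟨hj.1, by omega⟩)
        have h3 : ε j * (ε j - 1) = 0 := by linear_combination h1
        rcases mul_eq_zero.mp h3 with h | h <;> omega
      have htval : t = (k : ℤ) + 2 := by
        have hsplitt := Finset.sum_Icc_succ_top hksucc ε
        rw [ht, hsplitt, Finset.sum_congr rfl hε1k, htop2, aux_sum_one]
      refine Or.inr ⟨⟨hdall, hε1k, htop2, ?_⟩, ?_⟩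
      · push_cast
        linarith [hD, hd12, htval]
      · rintro ⟨-, hA2, -, -⟩
        have h1 := hdall (k + 3) (mem_Icc.mpr ⟨by omega, le_refl _⟩)
        omega
    · -- case (1): d = (a,…,a,a+1), ε = (1,…,1)
      have hQt0 : Q - t = 0 := by omega
      have hε1 : ∀ j ∈ Icc 1 (k + 1), ε j = 1 := by
        have hz := (Finset.sum_eq_zero_iff_of_nonneg hHnn).mp (by rw [← hH]; exact hQt0)
        intro j hj
        have h1 := hz j hj
        have h2 := hε j hj
        have h3 : ε j * (ε j - 1) = 0 := by linear_combination h1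
        rcases mul_eq_zero.mp h3 with h | h <;> omega
      have hsplit := Finset.sum_Icc_succ_top hksucc (fun j => ε j * (d (j + 2) - d 2))
      simp only [e4] at hsplit
      have hεk1 : ε (k + 1) = 1 := hε1 (k + 1) (mem_Icc.mpr ⟨hksucc, le_refl _⟩)
      have hG1' : ∑ j ∈ Icc 1 k, ε j * (d (j + 2) - d 2) + (d (k + 3) - d 2) = 1 := by
        rw [← hG11, hGdef, hsplit, hεk1, one_mul]
      have hpart_nn : 0 ≤ ∑ j ∈ Icc 1 k, ε j * (d (j + 2) - d 2) :=
        Finset.sum_nonneg fun j hj => by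
          rw [mem_Icc] at hj
          exact mul_nonneg (le_of_lt (hε j (mem_Icc.mpr ⟨hj.1, by omega⟩)))
            (sub_nonneg.mpr (hd2le j (mem_Icc.mpr ⟨hj.1, by omega⟩)))
      have hlast_nn : 0 ≤ d (k + 3) - d 2 := by
        have := hsort 2 (hmem 2 (by omega) (by omega)) (k + 3) (hmem _ (by omega) (by omega))
          (by omega)
        linarith
      have hlast1 : d (k + 3) - d 2 = 1 := by
        by_contra hne
        have h0 : d (k + 3) = d 2 := by omega
        have hpart_le : ∑ j ∈ Icc 1 k, ε j * (d (j + 2) - d 2) ≤ 0 := by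
          refine Finset.sum_nonpos fun j hj => ?_
          rw [mem_Icc] at hj
          have h1 : d (j + 2) ≤ d (k + 3) :=
            hsort (j + 2) (hmem _ (by omega) (by omega)) (k + 3)
              (hmem _ (by omega) (by omega)) (by omega)
          have h2 := hε j (mem_Icc.mpr ⟨hj.1, by omega⟩)
          have h3 : d (j + 2) - d 2 ≤ 0 := by linarith
          exact mul_nonpos_iff.mpr (Or.inl ⟨le_of_lt h2, h3⟩)
        linarith
      have hpart0 : ∑ j ∈ Icc 1 k, ε j * (d (j + 2) - d 2) = 0 := by linarith
      have hdeq1 : ∀ j ∈ Icc 1 k, d (j + 2) = d 2 := by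
        have hz2 := (Finset.sum_eq_zero_iff_of_nonneg (fun j hj => by
          rw [mem_Icc] at hj
          exact mul_nonneg (le_of_lt (hε j (mem_Icc.mpr ⟨hj.1, by omega⟩)))
            (sub_nonneg.mpr (hd2le j (mem_Icc.mpr ⟨hj.1, by omega⟩))))).mp hpart0
        intro j hj
        have h1 := hz2 j hj
        rw [mem_Icc] at hj
        have h2 := hε j (mem_Icc.mpr ⟨hj.1, by omega⟩)
        rcases mul_eq_zero.mp h1 with h | h <;> omega
      have hdall1 : ∀ i ∈ Icc 1 (k + 2), d i = d 1 := by
        intro i hi; rw [mem_Icc] at hi; obtain ⟨hi1, hi2⟩ := hi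
        rcases Nat.lt_or_ge i 3 with h | h
        · interval_cases i
          · rfl
          · exact hd12.symm
        · obtain ⟨j, rfl⟩ : ∃ j, i = j + 2 := ⟨i - 2, by omega⟩
          rw [hdeq1 j (mem_Icc.mpr ⟨by omega, by omega⟩)]
          exact hd12.symm
      have htval : t = (k : ℤ) + 1 := by
        rw [ht, Finset.sum_congr rfl hε1, aux_sum_one]
        push_cast; ring
      have hA2' : d (k + 3) = d 1 + 1 := by omega
      refine Or.inl ⟨⟨hdall1, hA2', hε1, ?_⟩, ?_⟩
      · push_cast
        linarith [hD, hd12, htval]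
      · rintro ⟨hB1, -, -, -⟩
        have h1 := hB1 (k + 3) (mem_Icc.mpr ⟨by omega, le_refl _⟩)
        omega
  · -- backward direction
    intro hX
    rcases hX with ⟨⟨hA1, hA2, hA3, -⟩, -⟩ | ⟨⟨hB1, hB2, hB3, -⟩, -⟩
    · -- case (1)
      have hd12 : d 2 = d 1 := hA1 2 (mem_Icc.mpr ⟨by omega, by omega⟩)
      have htval : t = (k : ℤ) + 1 := by
        rw [ht, Finset.sum_congr rfl hA3, aux_sum_one]
        push_cast; ring
      have hQval : Q = (k : ℤ) + 1 := by
        rw [hQdef, Finset.sum_congr rfl (fun j hj => by rw [hA3 j hj]; norm_num :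
          ∀ j ∈ Icc 1 (k + 1), ε j ^ 2 = 1), aux_sum_one]
        push_cast; ring
      have hGval : G = 1 := by
        have hsplit := Finset.sum_Icc_succ_top hksucc (fun j => ε j * (d (j + 2) - d 2))
        simp only [e4] at hsplit
        rw [hGdef, hsplit]
        have hz : ∑ j ∈ Icc 1 k, ε j * (d (j + 2) - d 2) = 0 :=
          Finset.sum_eq_zero fun j hj => by
            rw [mem_Icc] at hj
            rw [hA1 (j + 2) (mem_Icc.mpr ⟨by omega, by omega⟩), hd12]; ring
        rw [hz, hA3 (k + 1) (mem_Icc.mpr ⟨hksucc, le_refl _⟩), hA2, hd12]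
        ring
      rw [hGval, hQval, htval]
      have h0 : d 1 - d 2 = 0 := by linarith
      rw [h0]; ring
    · -- case (2)
      have hd12 : d 2 = d 1 := hB1 2 (mem_Icc.mpr ⟨by omega, by omega⟩)
      have hGval : G = 0 := by
        rw [hGdef]
        exact Finset.sum_eq_zero fun j hj => by
          rw [mem_Icc] at hj
          rw [hB1 (j + 2) (mem_Icc.mpr ⟨by omega, by omega⟩), hd12]; ring
      have htval : t = (k : ℤ) + 2 := by
        have hsplitt := Finset.sum_Icc_succ_top hksucc ε
        rw [ht, hsplitt, Finset.sum_congr rfl hB2, hB3, aux_sum_one]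
      have hQval : Q = (k : ℤ) + 4 := by
        have hsplit := Finset.sum_Icc_succ_top hksucc (fun j => (ε j) ^ 2)
        rw [hQdef, hsplit, Finset.sum_congr rfl (fun j hj => by rw [hB2 j hj]; norm_num :
          ∀ j ∈ Icc 1 k, ε j ^ 2 = 1), hB3, aux_sum_one]
        norm_num
      rw [hGval, hQval, htval]
      have h0 : d 1 - d 2 = 0 := by linarith
      rw [h0]; ring
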